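/- In a partial cube, the vertex set of every 4-cycle is gated. -/

import Mathlib

open SimpleGraph

namespace Mediangle

/-- The interval `[u,v]` in a graph: vertices on shortest `u,v`-paths. -/
def interval {V : Type*} (G : SimpleGraph V) (u v : V) : Set V :=
  {x | G.dist u x + G.dist x v = G.dist u v}

/-- A set of vertices is convex if it contains the interval between any two of its vertices. -/
def GConvex {V : Type*} (G : SimpleGraph V) (A : Set V) : Prop :=
  ∀ x ∈ A, ∀ y ∈ A, interval G x y ⊆ A

/-- A set `A` is gated: every vertex `u` has a gate `g ∈ A` with `g ∈ [u,v]` for all `v ∈ A`. -/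
def IsGated {V : Type*} (G : SimpleGraph V) (A : Set V) : Prop :=
  ∀ u : V, ∃ g ∈ A, ∀ v ∈ A, g ∈ interval G u v

/-- A set `A` is antipodal: every `v ∈ A` has an antipode `w` with `A = [v,w]`. -/
def IsAntipodalSet {V : Type*} (G : SimpleGraph V) (A : Set V) : Prop :=
  ∀ v ∈ A, ∃ w ∈ A, A = interval G v w

/-- A graph is antipodal if every vertex `v` has an antipode `w` with `V = [v,w]`. -/
def IsAntipodal {V : Type*} (G : SimpleGraph V) : Prop :=
  ∀ v : V, ∃ w : V, interval G v w = Set.univ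

/-- A convex cycle: a cycle whose vertex set is convex. -/
def ConvexCycle {V : Type*} (G : SimpleGraph V) {a : V} (c : G.Walk a a) : Prop :=
  c.IsCycle ∧ GConvex G {v | v ∈ c.support}

/-- Bipartite mediangle graph: connected, bipartite, satisfying the Cycle Condition and
the Intersection of Convex Cycles condition. -/
def IsMediangle {V : Type*} (G : SimpleGraph V) : Prop :=
  G.Connected ∧ G.Colorable 2 ∧
  (∀ u x y z : V, G.Adj z x → G.Adj z y → x ≠ y →
    G.dist u x + 1 = G.dist u z → G.dist u y + 1 = G.dist u z →
    ∃ c : G.Walk z z, ConvexCycle G c ∧ s(z, x) ∈ c.edges ∧ s(z, y) ∈ c.edges ∧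
      c.getVert (c.length / 2) ∈ interval G u x ∩ interval G u y) ∧
  (∀ (a b : V) (c₁ : G.Walk a a) (c₂ : G.Walk b b),
    ConvexCycle G c₁ → ConvexCycle G c₂ →
    {v | v ∈ c₁.support} ≠ {v | v ∈ c₂.support} →
    {e : Sym2 V | e ∈ c₁.edges ∧ e ∈ c₂.edges}.Subsingleton)

/-- A graph is apiculate if for every basepoint `u` and vertices `x, y` there is a unique
`⪯_u`-maximal vertex in `[u,x] ∩ [u,y]` (the `u`-apex relative to `x` and `y`). -/
def IsApiculate {V : Type*} (G : SimpleGraph V) : Prop :=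
  ∀ u x y : V, ∃! a : V,
    a ∈ interval G u x ∩ interval G u y ∧
      ∀ b ∈ interval G u x ∩ interval G u y, a ∈ interval G u b → a = b

/-- The hypercube graph on the finite subsets of `U`: two finite subsets are adjacent iff
their symmetric difference has exactly one element. -/
def cubeGraph (U : Type) : SimpleGraph (Finset U) where
  Adj A B := ∃ e : U, symmDiff (A : Set U) (B : Set U) = {e}
  symm := by
    constructor
    rintro A B ⟨e, h⟩
    exact ⟨e, by rwa [symmDiff_comm]⟩
  loopless := by
    constructor
    rintro A ⟨e, h⟩
    rw [symmDiff_self] at h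
    exact Set.singleton_ne_empty e (h.symm.trans Set.bot_eq_empty)

/-- A partial cube: a connected graph admitting an isometric embedding into a hypercube. -/
def IsPartialCube {V : Type*} (G : SimpleGraph V) : Prop :=
  G.Connected ∧ ∃ (U : Type) (φ : V → Finset U),
    ∀ u v : V, (cubeGraph U).dist (φ u) (φ v) = G.dist u v

/-! ### Sign vectors, COMs and OMs -/

/-- Sign vectors on a ground set `U`. -/
abbrev SignVec (U : Type*) := U → SignType

/-- Composition of sign vectors. -/
def sComp {U : Type*} (X Y : SignVec U) : SignVec U :=
  fun e => if X e ≠ 0 then X e else Y e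

/-- Separator of two sign vectors. -/
def sep {U : Type*} (X Y : SignVec U) : Set U := {e | X e * Y e = -1}

/-- A Complex of Oriented Matroids: a system of sign vectors satisfying strong elimination
(SE) and face symmetry (FS). -/
structure IsCOM {U : Type*} (L : Set (SignVec U)) : Prop where
  se : ∀ X ∈ L, ∀ Y ∈ L, ∀ e ∈ sep X Y,
        ∃ Z ∈ L, Z e = 0 ∧ ∀ f ∉ sep X Y, Z f = sComp X Y f
  fs : ∀ X ∈ L, ∀ Y ∈ L, sComp X (-Y) ∈ L

/-- A system of sign vectors is simple if every sign occurs in every coordinate. -/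
def SimpleSys {U : Type*} (L : Set (SignVec U)) : Prop :=
  ∀ (e : U) (s : SignType), ∃ X ∈ L, X e = s

/-- The topes of a simple system: covectors with full support. -/
def topes {U : Type*} (L : Set (SignVec U)) : Set (SignVec U) :=
  {X ∈ L | ∀ e, X e ≠ 0}

/-- The tope graph: vertices the topes, two topes adjacent iff their separator is a
singleton. -/
def topeGraph {U : Type*} (L : Set (SignVec U)) : SimpleGraph (topes L) where
  Adj X Y := ∃ e : U, sep X.1 Y.1 = {e}
  symm := by
    constructor
    rintro X Y ⟨e, h⟩
    refine ⟨e, ?_⟩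
    rw [← h]
    ext f
    simp only [sep, Set.mem_setOf_eq, mul_comm]
  loopless := by
    constructor
    rintro ⟨X, hX⟩ ⟨e, h⟩
    have he : X e * X e = -1 := by
      have : e ∈ sep X X := by rw [h]; exact Set.mem_singleton e
      exact this
    cases hxe : X e <;> rw [hxe] at he <;> exact absurd he (by decide)

/-- An oriented matroid: a COM containing the zero sign vector. -/
def IsOM {U : Type*} (L : Set (SignVec U)) : Prop :=
  IsCOM L ∧ (0 : SignVec U) ∈ L

/-- The partial order on sign vectors determined coordinatewise by `0 < -1` and `0 < +1`. -/
def signLE {U : Type*} (X Y : SignVec U) : Prop :=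
  ∀ e, X e = 0 ∨ X e = Y e

/-- `L` contains a strict chain with `n + 1` elements (i.e., of length `n`). -/
def HasChainOfLength {U : Type*} (L : Set (SignVec U)) (n : ℕ) : Prop :=
  ∃ c : Fin (n + 1) → SignVec U, (∀ i, c i ∈ L) ∧
    ∀ i j : Fin (n + 1), i < j → signLE (c i) (c j) ∧ c i ≠ c j

/-- `L` has rank `r`: the longest chain in `(L, ≤)` has length `r`. -/
def HasRank {U : Type*} (L : Set (SignVec U)) (r : ℕ) : Prop :=
  HasChainOfLength L r ∧ ∀ n : ℕ, HasChainOfLength L n → n ≤ r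

/-- A simplicial oriented matroid: an OM of rank `r` in which every tope has degree exactly
`r` in the tope graph. -/
def IsSimplicialOM {U : Type*} (L : Set (SignVec U)) : Prop :=
  IsOM L ∧ ∃ r : ℕ, HasRank L r ∧
    ∀ T ∈ topes L, {Y ∈ topes L | ∃ e : U, sep T Y = {e}}.ncard = r

/-- The imprint of a vertex `u` in a set `A`. -/
def imprint {V : Type*} (G : SimpleGraph V) (u : V) (A : Set V) : Set V :=
  {x ∈ A | interval G u x ∩ A = {x}}

end Mediangle

namespace Mediangle

section Helpers

variable {U : Type} [DecidableEq U]

private lemma cube_adj_iff {A B : Finset U} :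
    (cubeGraph U).Adj A B ↔ ∃ e, symmDiff A B = {e} := by
  constructor
  · rintro ⟨e, h⟩
    exact ⟨e, Finset.coe_injective (by rw [Finset.coe_symmDiff, h, Finset.coe_singleton])⟩
  · rintro ⟨e, h⟩
    exact ⟨e, by rw [← Finset.coe_symmDiff, h, Finset.coe_singleton]⟩

private lemma card_le_length :
    ∀ {A B : Finset U} (p : (cubeGraph U).Walk A B), (symmDiff A B).card ≤ p.length := by
  intro A B p
  induction p with
  | nil => simp [symmDiff_self]
  | @cons A C B h p ih =>
    obtain ⟨e, he⟩ := cube_adj_iff.mp h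
    calc (symmDiff A B).card ≤ (symmDiff A C ∪ symmDiff C B).card :=
          Finset.card_le_card (symmDiff_triangle A C B)
      _ ≤ (symmDiff A C).card + (symmDiff C B).card := Finset.card_union_le _ _
      _ = 1 + (symmDiff C B).card := by rw [he, Finset.card_singleton]
      _ ≤ 1 + p.length := by omega
      _ = (SimpleGraph.Walk.cons h p).length := by simp [SimpleGraph.Walk.length_cons]; omega

private lemma exists_cube_walk :
    ∀ (n : ℕ) (A B : Finset U), (symmDiff A B).card = n →
      ∃ p : (cubeGraph U).Walk A B, p.length = n := by
  intro n
  induction n with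
  | zero =>
    intro A B h
    have : A = B := symmDiff_eq_bot.mp (Finset.card_eq_zero.mp h)
    subst this
    exact ⟨.nil, rfl⟩
  | succ n ih =>
    intro A B h
    have hne : (symmDiff A B).Nonempty := Finset.card_pos.mp (by omega)
    obtain ⟨e, he⟩ := hne
    have hadj : (cubeGraph U).Adj A (symmDiff A {e}) :=
      cube_adj_iff.mpr ⟨e, symmDiff_symmDiff_cancel_left _ _⟩
    have heq : symmDiff (symmDiff A {e}) B = (symmDiff A B).erase e := by
      ext x
      simp only [Finset.mem_symmDiff, Finset.mem_erase, Finset.mem_singleton]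
      by_cases hx : x = e
      · subst hx
        simp only [Finset.mem_symmDiff] at he
        tauto
      · tauto
    have hcard : (symmDiff (symmDiff A {e}) B).card = n := by
      rw [heq, Finset.card_erase_of_mem he, h]
      omega
    obtain ⟨p, hp⟩ := ih _ _ hcard
    exact ⟨.cons hadj p, by simp [hp]⟩

private lemma cube_dist (A B : Finset U) :
    (cubeGraph U).dist A B = (symmDiff A B).card := by
  obtain ⟨p, hp⟩ := exists_cube_walk _ A B rfl
  refine le_antisymm (hp ▸ SimpleGraph.dist_le p) ?_
  obtain ⟨q, hq⟩ := SimpleGraph.Reachable.exists_walk_length_eq_dist ⟨p⟩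
  exact hq ▸ card_le_length q

private lemma gate_aux {W B : Finset U} {e f : U}
    (he : e ∉ symmDiff W B) (hf : f ∉ symmDiff W B) {T : Finset U}
    (hT : T ⊆ {e, f}) :
    (symmDiff W B).card + (symmDiff B (symmDiff B T)).card
      = (symmDiff W (symmDiff B T)).card := by
  rw [symmDiff_symmDiff_cancel_left]
  have h1 : symmDiff W (symmDiff B T) = symmDiff (symmDiff W B) T :=
    (symmDiff_assoc _ _ _).symm
  have hd : Disjoint (symmDiff W B) T := by
    rw [Finset.disjoint_right]
    intro x hx
    rcases Finset.mem_insert.mp (hT hx) with rfl | hx'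
    · exact he
    · rw [Finset.mem_singleton] at hx'
      subst hx'
      exact hf
  rw [h1, hd.symmDiff_eq_sup, Finset.sup_eq_union, Finset.card_union_of_disjoint hd]

private lemma symmDiff_pair (X : Finset U) {x y : U} (h : x ≠ y) :
    symmDiff (symmDiff X {x}) {y} = symmDiff X {x, y} := by
  ext z
  simp only [Finset.mem_symmDiff, Finset.mem_singleton, Finset.mem_insert]
  by_cases hx : z = x <;> by_cases hy : z = y <;> simp_all

private lemma three_diff {A : Finset U} {e f g : U} (hef : e ≠ f) (hge : g ≠ e) (hgf : g ≠ f) :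
    symmDiff (symmDiff (symmDiff A {e}) {f}) (symmDiff A {g}) = {e, f, g} := by
  ext x
  simp only [Finset.mem_symmDiff, Finset.mem_singleton, Finset.mem_insert]
  by_cases hxe : x = e <;> by_cases hxf : x = f <;> by_cases hxg : x = g <;>
    by_cases hxA : x ∈ A <;> simp_all

end Helpers

/-- In a partial cube, the vertex set of every 4-cycle is gated. -/
theorem fourCycle_isGated_of_partialCube {V : Type*} (G : SimpleGraph V)
    (hpc : IsPartialCube G) {a : V} (c : G.Walk a a) (hc : c.IsCycle)
    (hlen : c.length = 4) :
    IsGated G {v | v ∈ c.support} := by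
  classical
  obtain ⟨hconn, U, φ, hφ⟩ := hpc
  have hdist : ∀ x y : V, G.dist x y = (symmDiff (φ x) (φ y)).card := fun x y => by
    rw [← hφ x y, cube_dist]
  have hinj : ∀ x y : V, φ x = φ y → x = y := by
    intro x y h
    refine hconn.dist_eq_zero_iff.mp ?_
    rw [hdist, h, symmDiff_self]
    simp
  have hadj1 : ∀ x y : V, G.Adj x y → ∃ e, symmDiff (φ x) (φ y) = {e} := by
    intro x y h
    refine Finset.card_eq_one.mp ?_
    rw [← hdist]
    exact SimpleGraph.dist_eq_one_iff_adj.mpr h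
  cases c with
  | nil => simp at hlen
  | cons h1 p1 =>
  cases p1 with
  | nil => simp at hlen
  | cons h2 p2 =>
  cases p2 with
  | nil => simp at hlen
  | cons h3 p3 =>
  cases p3 with
  | nil => simp at hlen
  | cons h4 p4 =>
  cases p4 with
  | cons h5 p5 => simp [SimpleGraph.Walk.length_cons] at hlen
  | nil =>
  rename_i b cc d
  -- h1 : G.Adj a b, h2 : G.Adj b cc, h3 : G.Adj cc d, h4 : G.Adj d a
  have hnd := hc.support_nodup
  simp [SimpleGraph.Walk.support_cons, List.nodup_cons] at hnd
  obtain ⟨⟨hbc, hbd, hba⟩, ⟨hcd, hca⟩, hda⟩ := hnd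
  obtain ⟨e, he⟩ := hadj1 a b h1
  obtain ⟨f, hf⟩ := hadj1 b cc h2
  have hB1 : φ b = symmDiff (φ a) {e} := by
    rw [← he, symmDiff_symmDiff_cancel_left]
  have hB2 : φ cc = symmDiff (symmDiff (φ a) {e}) {f} := by
    rw [← hB1, ← hf, symmDiff_symmDiff_cancel_left]
  have hef : e ≠ f := by
    rintro rfl
    exact hca (hinj _ _ (by rw [hB2, symmDiff_symmDiff_cancel_right]))
  obtain ⟨g, hg⟩ := hadj1 d a h4
  have hg' : symmDiff (φ a) (φ d) = {g} := by rw [symmDiff_comm]; exact hg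
  have hB3' : φ d = symmDiff (φ a) {g} := by
    rw [← hg', symmDiff_symmDiff_cancel_left]
  obtain ⟨k, hk⟩ := hadj1 cc d h3
  have hcdcard : (symmDiff (φ cc) (φ d)).card = 1 := by rw [hk]; simp
  have hgf : g = f := by
    by_contra hgf
    have hge : g ≠ e := by
      rintro rfl
      exact hbd (hinj _ _ (by rw [hB1, hB3'])).symm
    rw [hB2, hB3', three_diff hef hge hgf] at hcdcard
    rw [Finset.card_insert_of_notMem (by simp [hef, (Ne.symm hge)]),
      Finset.card_insert_of_notMem (by simp [Ne.symm hgf])] at hcdcard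
    simp at hcdcard
  have hB3 : φ d = symmDiff (φ a) {f} := by rw [← hgf]; exact hB3'
  clear hg hg' hk hcdcard hB3'
  -- the gate
  intro u
  have mkInterval : ∀ gv v : V, ∀ T : Finset U, T ⊆ {e, f} →
      e ∉ symmDiff (φ u) (φ gv) → f ∉ symmDiff (φ u) (φ gv) →
      φ v = symmDiff (φ gv) T → gv ∈ interval G u v := by
    intro gv v T hT he1 hf1 hv
    show G.dist u gv + G.dist gv v = G.dist u v
    rw [hdist, hdist, hdist, hv]
    exact gate_aux he1 hf1 hT
  have hTe : ({e} : Finset U) ⊆ {e, f} := by intro z hz; simp_all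
  have hTf : ({f} : Finset U) ⊆ {e, f} := by intro z hz; simp_all
  have hT0 : (∅ : Finset U) ⊆ {e, f} := Finset.empty_subset _
  have hTef : ({e, f} : Finset U) ⊆ {e, f} := le_refl _
  have hmem : ∀ v : V, v ∈ {v | v ∈ (SimpleGraph.Walk.cons h1 (SimpleGraph.Walk.cons h2
      (SimpleGraph.Walk.cons h3 (SimpleGraph.Walk.cons h4 SimpleGraph.Walk.nil)))).support}
      ↔ (v = a ∨ v = b ∨ v = cc ∨ v = d) := by
    intro v
    simp [SimpleGraph.Walk.support_cons]
    tauto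
  set W := φ u with hW
  by_cases he0 : e ∈ symmDiff W (φ a) <;> by_cases hf0 : f ∈ symmDiff W (φ a)
  · -- gate cc
    refine ⟨cc, (hmem cc).mpr (by tauto), ?_⟩
    intro v hv
    have hWB : symmDiff W (φ cc) = symmDiff (symmDiff (symmDiff W (φ a)) {e}) {f} := by
      rw [hB2, ← symmDiff_assoc, ← symmDiff_assoc]
    have he1 : e ∉ symmDiff W (φ cc) := by
      rw [hWB]
      simp [Finset.mem_symmDiff, he0, hef]
    have hf1 : f ∉ symmDiff W (φ cc) := by
      rw [hWB]
      simp [Finset.mem_symmDiff, hf0, Ne.symm hef]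
    rcases (hmem v).mp hv with rfl | rfl | rfl | rfl
    · refine mkInterval _ _ _ hTef he1 hf1 ?_
      rw [hB2, symmDiff_pair _ hef, symmDiff_symmDiff_cancel_right]
    · refine mkInterval _ _ _ hTf he1 hf1 ?_
      rw [hB1, hB2, symmDiff_symmDiff_cancel_right]
    · exact mkInterval _ _ _ hT0 he1 hf1 (by rw [← Finset.bot_eq_empty, symmDiff_bot])
    · refine mkInterval _ _ _ hTe he1 hf1 ?_
      rw [hB3, hB2, symmDiff_right_comm, symmDiff_symmDiff_cancel_right]
  · -- gate b
    refine ⟨b, (hmem b).mpr (by tauto), ?_⟩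
    intro v hv
    have hWB : symmDiff W (φ b) = symmDiff (symmDiff W (φ a)) {e} := by
      rw [hB1, ← symmDiff_assoc]
    have he1 : e ∉ symmDiff W (φ b) := by
      rw [hWB]; simp [Finset.mem_symmDiff, he0]
    have hf1 : f ∉ symmDiff W (φ b) := by
      rw [hWB]; simp [Finset.mem_symmDiff, hf0, Ne.symm hef]
    rcases (hmem v).mp hv with rfl | rfl | rfl | rfl
    · refine mkInterval _ _ _ hTe he1 hf1 ?_
      rw [hB1, symmDiff_symmDiff_cancel_right]
    · exact mkInterval _ _ _ hT0 he1 hf1 (by rw [← Finset.bot_eq_empty, symmDiff_bot])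
    · exact mkInterval _ _ _ hTf he1 hf1 (by rw [hB2, hB1])
    · refine mkInterval _ _ _ hTef he1 hf1 ?_
      rw [hB3, hB1, ← symmDiff_pair _ hef, symmDiff_symmDiff_cancel_right]
  · -- gate d
    refine ⟨d, (hmem d).mpr (by tauto), ?_⟩
    intro v hv
    have hWB : symmDiff W (φ d) = symmDiff (symmDiff W (φ a)) {f} := by
      rw [hB3, ← symmDiff_assoc]
    have he1 : e ∉ symmDiff W (φ d) := by
      rw [hWB]; simp [Finset.mem_symmDiff, he0, hef]
    have hf1 : f ∉ symmDiff W (φ d) := by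
      rw [hWB]; simp [Finset.mem_symmDiff, hf0]
    rcases (hmem v).mp hv with rfl | rfl | rfl | rfl
    · refine mkInterval _ _ _ hTf he1 hf1 ?_
      rw [hB3, symmDiff_symmDiff_cancel_right]
    · refine mkInterval _ _ _ hTef he1 hf1 ?_
      rw [hB1, hB3, ← symmDiff_pair _ hef, symmDiff_right_comm,
        symmDiff_symmDiff_cancel_right]
    · refine mkInterval _ _ _ hTe he1 hf1 ?_
      rw [hB2, hB3, symmDiff_right_comm]
    · exact mkInterval _ _ _ hT0 he1 hf1 (by rw [← Finset.bot_eq_empty, symmDiff_bot])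
  · -- gate a
    refine ⟨a, (hmem a).mpr (by tauto), ?_⟩
    intro v hv
    rcases (hmem v).mp hv with rfl | rfl | rfl | rfl
    · exact mkInterval _ _ _ hT0 he0 hf0 (by rw [← Finset.bot_eq_empty, symmDiff_bot])
    · exact mkInterval _ _ _ hTe he0 hf0 hB1
    · refine mkInterval _ _ _ hTef he0 hf0 ?_
      rw [hB2, symmDiff_pair _ hef]
    · exact mkInterval _ _ _ hTf he0 hf0 hB3

end Mediangle
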